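/- Let F be a field and σ a ring automorphism of F with σ ∘ σ = id. The projective centralizer PK_{1,σ} = {g ∈ SL₂(F) : θ_{1,σ}(g) = g or θ_{1,σ}(g) = -g} acts transitively on the projective line ℙ¹(F) if and only if: (a) there is no x ∈ F with x·σ(x) = -1, and (b) for all x, y ∈ F there exist z ∈ F and ε ∈ {1, -1} with x·σ(x) + y·σ(y) = ε·z·σ(z). -/

import Mathlib

open Matrix

section FlipAux
variable {F : Type*} [Field F] (σ : F ≃+* F)

/-- The matrix form of the flip `θ_{1,σ}`. -/
private def θm (X : Matrix (Fin 2) (Fin 2) F) : Matrix (Fin 2) (Fin 2) F :=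
  !![0,1;-1,0] * X.map σ * !![0,-1;1,0]

private lemma AB_one : (!![0,1;-1,0] : Matrix (Fin 2) (Fin 2) F) * !![0,-1;1,0] = 1 := by
  ext i j; fin_cases i <;> fin_cases j <;> simp [Matrix.mul_apply, Fin.sum_univ_two]

private lemma BA_one : (!![0,-1;1,0] : Matrix (Fin 2) (Fin 2) F) * !![0,1;-1,0] = 1 := by
  ext i j; fin_cases i <;> fin_cases j <;> simp [Matrix.mul_apply, Fin.sum_univ_two]

private lemma A_inv : (!![0,1;-1,0] : Matrix (Fin 2) (Fin 2) F)⁻¹ = !![0,-1;1,0] :=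
  Matrix.inv_eq_right_inv AB_one

private lemma theta_apply (a b c d : F) :
    θm σ !![a,b;c,d] = !![σ d, -σ c; -σ b, σ a] := by
  ext i j
  fin_cases i <;> fin_cases j <;>
    simp [θm, Matrix.mul_apply, Matrix.vecMul, dotProduct, Fin.sum_univ_two,
      Matrix.map_apply]

private lemma theta_mul (X Y : Matrix (Fin 2) (Fin 2) F) :
    θm σ (X * Y) = θm σ X * θm σ Y := by
  have hmap : (X * Y).map ⇑σ = X.map ⇑σ * Y.map ⇑σ := by
    ext i j; simp [Matrix.map_apply, Matrix.mul_apply, Fin.sum_univ_two, map_add, _root_.map_mul]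
  simp only [θm, hmap]
  calc !![0,1;-1,0] * (X.map ⇑σ * Y.map ⇑σ) * !![0,-1;1,0]
      = !![0,1;-1,0] * X.map ⇑σ * (!![0,-1;1,0] * !![0,1;-1,0]) * Y.map ⇑σ * !![0,-1;1,0] := by
        rw [BA_one]; noncomm_ring
    _ = _ := by noncomm_ring

/-- Membership in the projective centralizer. -/
private def Pg (g : SpecialLinearGroup (Fin 2) F) : Prop :=
  θm σ (g : Matrix (Fin 2) (Fin 2) F) = g ∨
    θm σ (g : Matrix (Fin 2) (Fin 2) F) = -(g : Matrix (Fin 2) (Fin 2) F)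

private lemma theta_one : θm σ (1 : Matrix (Fin 2) (Fin 2) F) = 1 := by
  have : (1 : Matrix (Fin 2) (Fin 2) F) = !![1,0;0,1] := by
    ext i j; fin_cases i <;> fin_cases j <;> simp
  rw [this, theta_apply]; simp

private lemma Pg_mul {g h : SpecialLinearGroup (Fin 2) F} (hg : Pg σ g) (hh : Pg σ h) :
    Pg σ (g * h) := by
  have hc : ((g * h : SpecialLinearGroup (Fin 2) F) : Matrix (Fin 2) (Fin 2) F)
      = (g : Matrix (Fin 2) (Fin 2) F) * h := rfl
  unfold Pg at *
  rw [hc, theta_mul]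
  rcases hg with hg | hg <;> rcases hh with hh | hh <;> rw [hg, hh] <;>
    simp [mul_neg, neg_mul, neg_neg]

private lemma Pg_inv {g : SpecialLinearGroup (Fin 2) F} (hg : Pg σ g) : Pg σ g⁻¹ := by
  have h1 : ((g⁻¹ : SpecialLinearGroup (Fin 2) F) : Matrix (Fin 2) (Fin 2) F) *
      (g : Matrix (Fin 2) (Fin 2) F) = 1 := by
    exact congrArg Subtype.val (inv_mul_cancel g)
  have h2 : (g : Matrix (Fin 2) (Fin 2) F) *
      ((g⁻¹ : SpecialLinearGroup (Fin 2) F) : Matrix (Fin 2) (Fin 2) F) = 1 := by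
    exact congrArg Subtype.val (mul_inv_cancel g)
  have key : θm σ ((g⁻¹ : SpecialLinearGroup (Fin 2) F) : Matrix (Fin 2) (Fin 2) F) *
      θm σ (g : Matrix (Fin 2) (Fin 2) F) = 1 := by
    rw [← theta_mul, h1, theta_one]
  unfold Pg at *
  rcases hg with hg | hg
  · left
    rw [hg] at key
    calc θm σ ((g⁻¹ : SpecialLinearGroup (Fin 2) F) : Matrix (Fin 2) (Fin 2) F)
        = θm σ ((g⁻¹ : SpecialLinearGroup (Fin 2) F) : Matrix (Fin 2) (Fin 2) F) *
          ((g : Matrix (Fin 2) (Fin 2) F) *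
            ((g⁻¹ : SpecialLinearGroup (Fin 2) F) : Matrix (Fin 2) (Fin 2) F)) := by
            rw [h2, mul_one]
      _ = _ := by rw [← mul_assoc, key, one_mul]
  · right
    rw [hg] at key
    have key' : θm σ ((g⁻¹ : SpecialLinearGroup (Fin 2) F) : Matrix (Fin 2) (Fin 2) F) *
        (g : Matrix (Fin 2) (Fin 2) F) = -1 := by
      have := congrArg (fun M => -M) key
      simpa [mul_neg] using this
    calc θm σ ((g⁻¹ : SpecialLinearGroup (Fin 2) F) : Matrix (Fin 2) (Fin 2) F)
        = θm σ ((g⁻¹ : SpecialLinearGroup (Fin 2) F) : Matrix (Fin 2) (Fin 2) F) *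
          ((g : Matrix (Fin 2) (Fin 2) F) *
            ((g⁻¹ : SpecialLinearGroup (Fin 2) F) : Matrix (Fin 2) (Fin 2) F)) := by
            rw [h2, mul_one]
      _ = _ := by rw [← mul_assoc, key', neg_one_mul]

/-- The hermitian form `Q(v) = v₀ σ(v₀) + v₁ σ(v₁)`. -/
private def Qf (v : Fin 2 → F) : F := v 0 * σ (v 0) + v 1 * σ (v 1)

private lemma Q_mulVec (hσ : ∀ x, σ (σ x) = x) (g : SpecialLinearGroup (Fin 2) F)
    (hg : θm σ (g : Matrix (Fin 2) (Fin 2) F) = g ∨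
      θm σ (g : Matrix (Fin 2) (Fin 2) F) = -(g : Matrix (Fin 2) (Fin 2) F))
    (v : Fin 2 → F) :
    Qf σ ((g : Matrix (Fin 2) (Fin 2) F).mulVec v) = Qf σ v ∨
    Qf σ ((g : Matrix (Fin 2) (Fin 2) F).mulVec v) = - Qf σ v := by
  set M := (g : Matrix (Fin 2) (Fin 2) F) with hM
  have heta : M = !![M 0 0, M 0 1; M 1 0, M 1 1] := Matrix.eta_fin_two M
  set a := M 0 0; set b := M 0 1; set c := M 1 0; set d := M 1 1
  have hdet : a * d - b * c = 1 := by
    have := g.property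
    rw [← hM, Matrix.det_fin_two] at this
    exact this
  have hmv : M.mulVec v = ![a * v 0 + b * v 1, c * v 0 + d * v 1] := by
    funext i
    fin_cases i <;> simp [Matrix.mulVec, dotProduct, Fin.sum_univ_two] <;> rfl
  rcases hg with hgg | hgg
  · left
    rw [heta, theta_apply] at hgg
    have h00 := (Matrix.ext_iff.2 hgg) 0 0
    have h01 := (Matrix.ext_iff.2 hgg) 0 1
    simp [← heta] at h00 h01
    have hd : d = σ a := by rw [← h00, hσ]
    have hc : c = - σ b := by rw [← h01]; simp [map_neg, hσ]
    have hdet' : a * σ a + b * σ b = 1 := by rw [hd, hc] at hdet; linear_combination hdet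
    rw [hmv]
    simp only [Qf, Matrix.cons_val_zero, Matrix.cons_val_one, Matrix.head_cons]
    rw [hd, hc]
    simp only [map_add, _root_.map_mul, map_neg, hσ]
    linear_combination (v 0 * σ (v 0) + v 1 * σ (v 1)) * hdet'
  · right
    rw [heta, theta_apply] at hgg
    have hgg' : (!![σ d, -σ c; -σ b, σ a] : Matrix (Fin 2) (Fin 2) F) = !![-a,-b;-c,-d] := by
      rw [hgg, ← heta]
      ext i j; fin_cases i <;> fin_cases j <;> simp [← heta] <;> rfl
    have h00 := (Matrix.ext_iff.2 hgg') 0 0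
    have h01 := (Matrix.ext_iff.2 hgg') 0 1
    simp at h00 h01
    have hd : d = - σ a := by
      have := congrArg σ h00; rw [hσ] at this; rw [this]; simp [map_neg]
    have hc : c = σ b := by
      have := congrArg σ h01; rw [hσ] at this; rw [this]
    have hdet' : a * σ a + b * σ b = -1 := by rw [hd, hc] at hdet; linear_combination -hdet
    rw [hmv]
    simp only [Qf, Matrix.cons_val_zero, Matrix.cons_val_one, Matrix.head_cons]
    rw [hd, hc]
    simp only [map_add, _root_.map_mul, map_neg, hσ]
    linear_combination (v 0 * σ (v 0) + v 1 * σ (v 1)) * hdet'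

set_option linter.unnecessarySeqFocus false in
/-- Orbit lemma: under the two norm conditions, every nonzero vector is reached from `e₁`. -/
private lemma orbit_e1 (hσ : ∀ x, σ (σ x) = x)
    (hno : ¬ ∃ x : F, x * σ x = -1)
    (hsum : ∀ x y : F, ∃ z ε : F, (ε = 1 ∨ ε = -1) ∧ x * σ x + y * σ y = ε * (z * σ z))
    (w : Fin 2 → F) (hw : w ≠ 0) :
    ∃ g : SpecialLinearGroup (Fin 2) F, Pg σ g ∧
      ∃ c : F, c ≠ 0 ∧ (g : Matrix (Fin 2) (Fin 2) F).mulVec ![1,0] = c • w := by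
  obtain ⟨z, ε, hε, hQ⟩ := hsum (w 0) (w 1)
  have hσ0 : ∀ x : F, σ x = 0 → x = 0 := fun x hx => by
    have := congrArg σ hx; rwa [hσ, map_zero] at this
  have hz : z ≠ 0 := by
    rintro rfl
    have hQ0 : w 0 * σ (w 0) + w 1 * σ (w 1) = 0 := by rw [hQ]; ring
    obtain ⟨i, hi⟩ := Function.ne_iff.mp hw
    have hcase : w 0 ≠ 0 ∨ w 1 ≠ 0 := by
      fin_cases i
      · exact Or.inl hi
      · exact Or.inr hi
    rcases hcase with h0 | h1
    · apply hno
      refine ⟨w 1 / w 0, ?_⟩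
      have hs0 : σ (w 0) ≠ 0 := fun h => h0 (hσ0 _ h)
      rw [map_div₀]
      field_simp
      linear_combination hQ0
    · apply hno
      refine ⟨w 0 / w 1, ?_⟩
      have hs1 : σ (w 1) ≠ 0 := fun h => h1 (hσ0 _ h)
      rw [map_div₀]
      field_simp
      linear_combination hQ0
  have hsz : σ z ≠ 0 := fun h => hz (hσ0 _ h)
  rcases hε with rfl | rfl
  · -- ε = 1, plus type
    set a := w 0 / z with ha
    set b := -σ (w 1 / z) with hb
    have hdet : (!![a, b; -σ b, σ a] : Matrix (Fin 2) (Fin 2) F).det = 1 := by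
      rw [Matrix.det_fin_two_of, hb, ha]
      simp only [map_neg, map_div₀, hσ, neg_neg]
      field_simp
      linear_combination hQ
    refine ⟨⟨!![a, b; -σ b, σ a], hdet⟩, ?_, z⁻¹, inv_ne_zero hz, ?_⟩
    · left
      show θm σ !![a, b; -σ b, σ a] = !![a, b; -σ b, σ a]
      rw [theta_apply]
      congr 1 <;> simp [hσ, map_neg]
    · show Matrix.mulVec !![a, b; -σ b, σ a] ![1,0] = z⁻¹ • w
      funext i
      fin_cases i <;>
        simp [Matrix.mulVec, dotProduct, Fin.sum_univ_two, ha, hb, map_neg, hσ,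
          div_eq_inv_mul]
  · -- ε = -1, minus type
    set a := w 0 / z with ha
    set b := σ (w 1 / z) with hb
    have hdet : (!![a, b; σ b, -σ a] : Matrix (Fin 2) (Fin 2) F).det = 1 := by
      rw [Matrix.det_fin_two_of, hb, ha]
      simp only [map_div₀, hσ]
      field_simp
      linear_combination -hQ
    refine ⟨⟨!![a, b; σ b, -σ a], hdet⟩, ?_, z⁻¹, inv_ne_zero hz, ?_⟩
    · right
      show θm σ !![a, b; σ b, -σ a] = -!![a, b; σ b, -σ a]
      rw [theta_apply]
      ext i j
      fin_cases i <;> fin_cases j <;> simp [hb, hσ, map_neg, map_div₀]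
    · show Matrix.mulVec !![a, b; σ b, -σ a] ![1,0] = z⁻¹ • w
      funext i
      fin_cases i <;>
        simp [Matrix.mulVec, dotProduct, Fin.sum_univ_two, ha, hb, hσ, div_eq_inv_mul]

end FlipAux

/-- The projective centralizer `PK_{1,σ}` of the standard flip
`θ_{1,σ}` acts transitively on `ℙ¹(F)` iff `-1` is not a norm and a sum of two
norms is `±1` times a norm. -/
theorem standard_flip_projectively_transitive_iff {F : Type*} [Field F]
    (σ : F ≃+* F) (hσ : ∀ x, σ (σ x) = x) :
    (∀ v w : Fin 2 → F, v ≠ 0 → w ≠ 0 →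
      ∃ g : SpecialLinearGroup (Fin 2) F,
        (!![0, 1; -1, 0] * (g : Matrix (Fin 2) (Fin 2) F).map σ *
            (!![0, 1; -1, 0])⁻¹ = (g : Matrix (Fin 2) (Fin 2) F) ∨
         !![0, 1; -1, 0] * (g : Matrix (Fin 2) (Fin 2) F).map σ *
            (!![0, 1; -1, 0])⁻¹ = -(g : Matrix (Fin 2) (Fin 2) F)) ∧
        ∃ c : F, c ≠ 0 ∧ (g : Matrix (Fin 2) (Fin 2) F).mulVec v = c • w) ↔
    ((¬ ∃ x : F, x * σ x = -1) ∧
      ∀ x y : F, ∃ z ε : F, (ε = 1 ∨ ε = -1) ∧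
        x * σ x + y * σ y = ε * (z * σ z)) := by
  have he1 : (![1, 0] : Fin 2 → F) ≠ 0 := by
    intro h
    have := congrFun h 0
    simp at this
  constructor
  · intro H
    constructor
    · rintro ⟨x, hx⟩
      have hv : (![1, x] : Fin 2 → F) ≠ 0 := by
        intro h
        have := congrFun h 0
        simp at this
      obtain ⟨g, hg, c, hc, hgv⟩ := H ![1, x] ![1, 0] hv he1
      rw [A_inv] at hg
      have hQ := Q_mulVec σ hσ g hg ![1, x]
      rw [hgv] at hQ
      have hQv : Qf σ (![1, x] : Fin 2 → F) = 0 := by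
        simp [Qf]
        linear_combination hx
      have hQc : Qf σ (c • (![1, 0] : Fin 2 → F)) = c * σ c := by
        simp [Qf]
      rw [hQc, hQv] at hQ
      have hcc : c * σ c = 0 := by rcases hQ with h | h <;> simpa using h
      rcases mul_eq_zero.mp hcc with h | h
      · exact hc h
      · apply hc
        have := congrArg σ h
        rwa [hσ, map_zero] at this
    · intro x y
      by_cases hxy : x = 0 ∧ y = 0
      · refine ⟨0, 1, Or.inl rfl, ?_⟩
        rw [hxy.1, hxy.2]
        simp
      · have hv : (![x, y] : Fin 2 → F) ≠ 0 := by
          intro h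
          exact hxy ⟨congrFun h 0, congrFun h 1⟩
        obtain ⟨g, hg, c, hc, hgv⟩ := H ![x, y] ![1, 0] hv he1
        rw [A_inv] at hg
        have hQ := Q_mulVec σ hσ g hg ![x, y]
        rw [hgv] at hQ
        have hQc : Qf σ (c • (![1, 0] : Fin 2 → F)) = c * σ c := by
          simp [Qf]
        rw [hQc] at hQ
        have hQv : Qf σ (![x, y] : Fin 2 → F) = x * σ x + y * σ y := by
          simp [Qf]
        rw [hQv] at hQ
        rcases hQ with h | h
        · exact ⟨c, 1, Or.inl rfl, by rw [← h]; ring⟩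
        · exact ⟨c, -1, Or.inr rfl, by linear_combination h⟩
  · rintro ⟨hno, hsum⟩ v w hv hw
    obtain ⟨gv, hgv, cv, hcv, hgv2⟩ := orbit_e1 σ hσ hno hsum v hv
    obtain ⟨gw, hgw, cw, hcw, hgw2⟩ := orbit_e1 σ hσ hno hsum w hw
    refine ⟨gw * gv⁻¹, ?_, cv⁻¹ * cw, mul_ne_zero (inv_ne_zero hcv) hcw, ?_⟩
    · rw [A_inv]
      exact Pg_mul σ hgw (Pg_inv σ hgv)
    · have hinv : ((gv⁻¹ : SpecialLinearGroup (Fin 2) F) : Matrix (Fin 2) (Fin 2) F).mulVec v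
          = cv⁻¹ • ![1, 0] := by
        have h1 : ((gv⁻¹ : SpecialLinearGroup (Fin 2) F) : Matrix (Fin 2) (Fin 2) F).mulVec
            ((gv : Matrix (Fin 2) (Fin 2) F).mulVec ![1, 0]) = ![1, 0] := by
          rw [Matrix.mulVec_mulVec, show ((gv⁻¹ : SpecialLinearGroup (Fin 2) F) :
            Matrix (Fin 2) (Fin 2) F) * (gv : Matrix (Fin 2) (Fin 2) F) = 1 from
            congrArg Subtype.val (inv_mul_cancel gv), Matrix.one_mulVec]
        rw [hgv2, Matrix.mulVec_smul] at h1
        calc ((gv⁻¹ : SpecialLinearGroup (Fin 2) F) : Matrix (Fin 2) (Fin 2) F).mulVec v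
            = cv⁻¹ • (cv • ((gv⁻¹ : SpecialLinearGroup (Fin 2) F) :
                Matrix (Fin 2) (Fin 2) F).mulVec v) := by
              rw [smul_smul, inv_mul_cancel₀ hcv, one_smul]
          _ = cv⁻¹ • ![1, 0] := by rw [h1]
      have hc : ((gw * gv⁻¹ : SpecialLinearGroup (Fin 2) F) : Matrix (Fin 2) (Fin 2) F)
          = (gw : Matrix (Fin 2) (Fin 2) F) * (gv⁻¹ : SpecialLinearGroup (Fin 2) F) := rfl
      rw [hc, ← Matrix.mulVec_mulVec, hinv, Matrix.mulVec_smul, hgw2, smul_smul]
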